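/- Let G = (V,E) be a finite connected graph and Bip(G) its edge subdivision. A chip configuration x ∈ Z^V is a break divisor of G if and only if d_G − 1 − x is a hypertree of Bip(G) on V, where d_G is the degree vector of G and 1 is the all-ones vector. -/

import Mathlib

open Finset

/-- The bipartite graph `Bip(G)` obtained from a graph `G` by subdividing each edge
with a new node. -/
def BipG {V : Type} (G : SimpleGraph V) : SimpleGraph (V ⊕ G.edgeSet) where
  Adj a b := ∃ (v : V) (e : G.edgeSet), v ∈ (e : Sym2 V) ∧
    ((a = Sum.inl v ∧ b = Sum.inr e) ∨ (b = Sum.inl v ∧ a = Sum.inr e))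
  symm := by
    constructor
    rintro a b ⟨v, e, hv, h | h⟩
    exacts [⟨v, e, hv, Or.inr h⟩, ⟨v, e, hv, Or.inl h⟩]
  loopless := by
    constructor
    rintro a ⟨v, e, hv, ⟨h1, h2⟩ | ⟨h1, h2⟩⟩ <;> subst h1 <;> simp at h2

/-- `x` is a break divisor of `G`: there is a spanning tree `T` and an assignment of
one chip to an endpoint of each edge outside `T` realizing `x`. -/
def IsBreakDivisor {V : Type} (G : SimpleGraph V) (x : V → ℤ) : Prop :=
  ∃ T : SimpleGraph V, T ≤ G ∧ T.IsTree ∧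
    ∃ c : G.edgeSet → V,
      (∀ e : G.edgeSet, (e : Sym2 V) ∉ T.edgeSet → c e ∈ (e : Sym2 V)) ∧
      ∀ v : V, x v =
        (({e : G.edgeSet | (e : Sym2 V) ∉ T.edgeSet ∧ c e = v}).ncard : ℤ)


open SimpleGraph


lemma aux_card_le {V : Type} [Fintype V] {H : SimpleGraph V} [Fintype H.edgeSet]
    (h : H.Connected) : Fintype.card V ≤ H.edgeFinset.card + 1 := by
  classical
  obtain ⟨r⟩ := h.nonempty
  have key : ∀ v : V, v ≠ r → ∃ w, H.Adj v w ∧ H.dist w r < H.dist v r := by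
    intro v hv
    obtain ⟨p, hp⟩ := (h v r).exists_walk_length_eq_dist
    cases p with
    | nil => exact absurd rfl hv
    | cons h' q =>
      refine ⟨_, h', ?_⟩
      have h1 : H.dist _ r ≤ q.length := SimpleGraph.dist_le q
      simp only [SimpleGraph.Walk.length_cons] at hp
      omega
  choose f hadj hdist using key
  have hinj : Function.Injective
      (fun v : {v : V // v ≠ r} => (⟨s(v.1, f v.1 v.2), SimpleGraph.mem_edgeFinset.2 (hadj v.1 v.2)⟩ :
        H.edgeFinset)) := by
    rintro ⟨v, hv⟩ ⟨w, hw⟩ hvw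
    simp only [Subtype.mk.injEq, Sym2.eq_iff] at hvw
    rcases hvw with ⟨h1, _⟩ | ⟨h1, h2⟩
    · exact Subtype.ext h1
    · exfalso
      have d1 := hdist v hv
      have d2 := hdist w hw
      rw [h2] at d1
      rw [← h1] at d2
      omega
  have := Fintype.card_le_of_injective _ hinj
  rw [Fintype.card_coe] at this
  have hcc : Fintype.card {v : V // v ≠ r} = Fintype.card V - 1 := by
    simp [Fintype.card_subtype_compl]
  have : Nonempty V := ⟨r⟩
  have : 0 < Fintype.card V := Fintype.card_pos
  omega

lemma aux_isTree_of_card {V : Type} [Fintype V] {H : SimpleGraph V} [Fintype H.edgeSet]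
    (h : H.Connected) (hc : H.edgeFinset.card + 1 = Fintype.card V) : H.IsTree := by
  classical
  refine ⟨h, ?_⟩
  rw [isAcyclic_iff_forall_adj_isBridge]
  intro v w hvw
  by_contra hbr
  rw [isBridge_iff] at hbr
  push_neg at hbr
  have hreach : (H \ fromEdgeSet {s(v, w)}).Reachable v w := hbr
  set H' : SimpleGraph V := H \ fromEdgeSet {s(v, w)} with hH'
  have hwalk : ∀ {a b : V}, H.Walk a b → H'.Reachable a b := by
    intro a b p
    induction p with
    | nil => exact Reachable.refl _
    | @cons a c b h' p ih =>
      refine Reachable.trans ?_ ih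
      by_cases he : s(a, c) = s(v, w)
      · rw [Sym2.eq_iff] at he
        rcases he with ⟨rfl, rfl⟩ | ⟨rfl, rfl⟩
        · exact hreach
        · exact hreach.symm
      · refine Adj.reachable ?_
        rw [hH', sdiff_adj, fromEdgeSet_adj]
        exact ⟨h', fun hmem => he (Set.mem_singleton_iff.1 hmem.1)⟩
  have hconn : H'.Connected := by
    haveI : Nonempty V := h.nonempty
    exact Connected.mk fun a b => hwalk (h a b).some
  have hes : H'.edgeSet = H.edgeSet \ {s(v, w)} := by
    rw [hH', edgeSet_sdiff, edgeSet_fromEdgeSet]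
    ext e
    simp only [Set.mem_diff, Set.mem_singleton_iff, Set.mem_setOf_eq, not_and, not_not]
    constructor
    · rintro ⟨he, h2⟩
      refine ⟨he, fun heq => ?_⟩
      exact hvw.ne (by simpa [heq, Sym2.mk_isDiag_iff] using h2 heq)
    · rintro ⟨he, hne⟩
      exact ⟨he, fun heq => absurd heq hne⟩
  haveI : Fintype H'.edgeSet := Fintype.ofFinite _
  have hfin : H'.edgeFinset = H.edgeFinset.erase s(v, w) := by
    ext e
    simp [mem_edgeFinset, hes, Finset.mem_erase, and_comm]
  have hle := aux_card_le hconn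
  have hmem : s(v, w) ∈ H.edgeFinset := mem_edgeFinset.2 hvw
  have := Finset.card_erase_of_mem hmem
  rw [hfin] at hle
  have : 1 ≤ H.edgeFinset.card := Finset.card_pos.2 ⟨_, hmem⟩
  omega


section Bip

variable {V : Type} {G : SimpleGraph V} {A : SimpleGraph (V ⊕ G.edgeSet)}

lemma bip_adj_inl (hA : A ≤ BipG G) {v : V} {b : V ⊕ G.edgeSet}
    (h : A.Adj (Sum.inl v) b) : ∃ e : G.edgeSet, v ∈ (e : Sym2 V) ∧ b = Sum.inr e := by
  obtain ⟨u, e, hu, ⟨h1, h2⟩ | ⟨h1, h2⟩⟩ := hA h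
  · exact ⟨e, Sum.inl.inj h1 ▸ hu, h2⟩
  · simp at h2

lemma bip_adj_inr (hA : A ≤ BipG G) {e : G.edgeSet} {b : V ⊕ G.edgeSet}
    (h : A.Adj (Sum.inr e) b) : ∃ v : V, v ∈ (e : Sym2 V) ∧ b = Sum.inl v := by
  obtain ⟨u, e', hu, ⟨h1, h2⟩ | ⟨h1, h2⟩⟩ := hA h
  · simp at h1
  · obtain rfl : e = e' := Sum.inr.inj h2
    exact ⟨u, hu, h1⟩

lemma bip_edge_equiv (hA : A ≤ BipG G) :
    Nat.card A.edgeSet = Nat.card (Σ e : G.edgeSet, A.neighborSet (Sum.inr e)) := by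
  refine (Nat.card_congr (Equiv.ofBijective
    (fun p : Σ e : G.edgeSet, A.neighborSet (Sum.inr e) =>
      (⟨s(Sum.inr p.1, p.2.1), p.2.2⟩ : A.edgeSet)) ⟨?_, ?_⟩)).symm
  · rintro ⟨e, b, hb⟩ ⟨e', b', hb'⟩ hp
    simp only [Subtype.mk.injEq, Sym2.eq_iff] at hp
    obtain ⟨v, hv, rfl⟩ := bip_adj_inr hA hb
    obtain ⟨v', hv', rfl⟩ := bip_adj_inr hA hb'
    rcases Sym2.eq_iff.1 (congrArg Subtype.val hp) with ⟨h1, h2⟩ | ⟨h1, h2⟩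
    · obtain rfl : e = e' := Sum.inr.inj h1
      simp [h2]
    · simp at h1
  · rintro ⟨f, hf⟩
    induction f with
    | _ a b =>
      cases a with
      | inl v =>
        obtain ⟨e, hv, rfl⟩ := bip_adj_inl hA hf
        exact ⟨⟨e, Sum.inl v, hf.symm⟩, Subtype.ext (Sym2.eq_swap)⟩
      | inr e =>
        obtain ⟨v, hv, rfl⟩ := bip_adj_inr hA hf
        exact ⟨⟨e, Sum.inl v, hf⟩, rfl⟩

lemma bip_neighbor_inr_subset (hA : A ≤ BipG G) {e : G.edgeSet} {u w : V}
    (he : (e : Sym2 V) = s(u, w)) :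
    A.neighborSet (Sum.inr e) ⊆ {Sum.inl u, Sum.inl w} := by
  intro b hb
  obtain ⟨v, hv, rfl⟩ := bip_adj_inr hA hb
  rw [he, Sym2.mem_iff] at hv
  rcases hv with rfl | rfl
  · exact Or.inl rfl
  · exact Or.inr rfl

lemma bip_neighbor_inl (hA : A ≤ BipG G) (v : V) :
    A.neighborSet (Sum.inl v) = Sum.inr '' {e : G.edgeSet | A.Adj (Sum.inl v) (Sum.inr e)} := by
  ext b
  constructor
  · intro hb
    obtain ⟨e, hv, rfl⟩ := bip_adj_inl hA hb
    exact ⟨e, hb, rfl⟩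
  · rintro ⟨e, he, rfl⟩
    exact he

end Bip


def chipGraph {V : Type} (G : SimpleGraph V) (T : SimpleGraph V) (c : G.edgeSet → V) :
    SimpleGraph (V ⊕ G.edgeSet) where
  Adj a b := ∃ (v : V) (e : G.edgeSet), v ∈ (e : Sym2 V) ∧
    ((e : Sym2 V) ∈ T.edgeSet ∨ c e ≠ v) ∧
    ((a = Sum.inl v ∧ b = Sum.inr e) ∨ (b = Sum.inl v ∧ a = Sum.inr e))
  symm := by
    constructor
    rintro a b ⟨v, e, hv, hcond, h | h⟩
    exacts [⟨v, e, hv, hcond, Or.inr h⟩, ⟨v, e, hv, hcond, Or.inl h⟩]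
  loopless := by
    constructor
    rintro a ⟨v, e, hv, hcond, ⟨h1, h2⟩ | ⟨h1, h2⟩⟩ <;> subst h1 <;> simp at h2

lemma chipGraph_le {V : Type} {G T : SimpleGraph V} {c : G.edgeSet → V} :
    chipGraph G T c ≤ BipG G := by
  rintro a b ⟨v, e, hv, _, h⟩
  exact ⟨v, e, hv, h⟩

lemma chipGraph_adj {V : Type} {G T : SimpleGraph V} {c : G.edgeSet → V} {v : V}
    {e : G.edgeSet} : (chipGraph G T c).Adj (Sum.inl v) (Sum.inr e) ↔
      v ∈ (e : Sym2 V) ∧ ((e : Sym2 V) ∈ T.edgeSet ∨ c e ≠ v) := by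
  constructor
  · rintro ⟨v', e', hv', hcond, ⟨h1, h2⟩ | ⟨h1, h2⟩⟩
    · obtain rfl : v = v' := Sum.inl.inj h1
      obtain rfl : e = e' := Sum.inr.inj h2
      exact ⟨hv', hcond⟩
    · simp at h2
  · rintro ⟨hv, hcond⟩
    exact ⟨v, e, hv, hcond, Or.inl ⟨rfl, rfl⟩⟩

lemma edge_exists_pair {V : Type} {G : SimpleGraph V} (e : G.edgeSet) :
    ∃ u w : V, u ≠ w ∧ (e : Sym2 V) = s(u, w) := by
  obtain ⟨z, hz⟩ := e
  induction z with
  | _ u w => exact ⟨u, w, ((G.mem_edgeSet).1 hz).ne, rfl⟩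

lemma setOf_mem_pair {V : Type} {u w : V} : {v : V | v ∈ s(u, w)} = ({u, w} : Set V) := by
  ext v; simp [Sym2.mem_iff]

lemma ncard_neighbor_eq_incidence {V : Type} [Fintype V] [DecidableEq V] (G : SimpleGraph V)
    (v : V) : (G.neighborSet v).ncard = ({e : G.edgeSet | v ∈ (e : Sym2 V)}).ncard := by
  classical
  rw [← Nat.card_coe_set_eq, ← Nat.card_coe_set_eq]
  refine (Nat.card_congr ((Equiv.trans ?_ (G.incidenceSetEquivNeighborSet v)))).symm
  exact
    { toFun := fun p => ⟨p.1.1, p.1.2, p.2⟩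
      invFun := fun p => ⟨⟨p.1, p.2.1⟩, p.2.2⟩
      left_inv := fun p => rfl
      right_inv := fun p => rfl }

lemma forward_dir {V : Type} [Fintype V] [DecidableEq V] (G : SimpleGraph V) (hG : G.Connected)
    (x : V → ℤ) (h : IsBreakDivisor G x) :
    ∃ A : SimpleGraph (V ⊕ G.edgeSet), A ≤ BipG G ∧ A.IsTree ∧
      ∀ v : V, ((A.neighborSet (Sum.inl v)).ncard : ℤ) =
        ((G.neighborSet v).ncard : ℤ) - 1 - x v + 1 := by
  classical
  obtain ⟨T, hTG, hT, c, hc, hx⟩ := h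
  set A := chipGraph G T c with hA
  have hAle : A ≤ BipG G := chipGraph_le
  refine ⟨A, hAle, ?_, ?_⟩
  · -- A is a tree
    obtain ⟨r⟩ : Nonempty V := hG.nonempty
    have hwT : ∀ {u w : V}, T.Walk u w → A.Reachable (Sum.inl u) (Sum.inl w) := by
      intro u w p
      induction p with
      | nil => exact Reachable.refl _
      | @cons a b d h' p ih =>
        have he : s(a, b) ∈ G.edgeSet := hTG h'
        have heT : ((⟨s(a, b), he⟩ : G.edgeSet) : Sym2 V) ∈ T.edgeSet := h'
        have h1 : A.Adj (Sum.inl a) (Sum.inr ⟨s(a, b), he⟩) :=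
          chipGraph_adj.2 ⟨Sym2.mem_mk_left _ _, Or.inl heT⟩
        have h2 : A.Adj (Sum.inl b) (Sum.inr ⟨s(a, b), he⟩) :=
          chipGraph_adj.2 ⟨Sym2.mem_mk_right _ _, Or.inl heT⟩
        exact (h1.reachable.trans h2.reachable.symm).trans ih
    have hreach : ∀ a : V ⊕ G.edgeSet, A.Reachable a (Sum.inl r) := by
      intro a
      cases a with
      | inl v => exact hwT ((hT.isConnected v r).some)
      | inr e =>
        obtain ⟨u, w, huw, hew⟩ := edge_exists_pair e
        have hex : ∃ v0 : V, A.Adj (Sum.inl v0) (Sum.inr e) := by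
          by_cases hT' : (e : Sym2 V) ∈ T.edgeSet
          · exact ⟨u, chipGraph_adj.2 ⟨by rw [hew]; exact Sym2.mem_mk_left _ _, Or.inl hT'⟩⟩
          · have hce := hc e hT'
            rw [hew, Sym2.mem_iff] at hce
            rcases hce with hcu | hcw
            · refine ⟨w, chipGraph_adj.2 ⟨by rw [hew]; exact Sym2.mem_mk_right _ _,
                Or.inr ?_⟩⟩
              rw [hcu]; exact huw
            · refine ⟨u, chipGraph_adj.2 ⟨by rw [hew]; exact Sym2.mem_mk_left _ _,
                Or.inr ?_⟩⟩
              rw [hcw]; exact huw.symm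
        obtain ⟨v0, hv0⟩ := hex
        exact hv0.symm.reachable.trans (hwT ((hT.isConnected v0 r).some))
    have hconn : A.Connected := by
      haveI : Nonempty (V ⊕ G.edgeSet) := ⟨Sum.inl r⟩
      exact Connected.mk fun a b => (hreach a).trans (hreach b).symm
    -- edge count
    have hfiber : ∀ e : G.edgeSet, Nat.card (A.neighborSet (Sum.inr e)) =
        if (e : Sym2 V) ∈ T.edgeSet then 2 else 1 := by
      intro e
      obtain ⟨u, w, huw, hew⟩ := edge_exists_pair e
      have himg : A.neighborSet (Sum.inr e) = Sum.inl ''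
          {v : V | v ∈ (e : Sym2 V) ∧ ((e : Sym2 V) ∈ T.edgeSet ∨ c e ≠ v)} := by
        ext b
        constructor
        · intro hb
          obtain ⟨v, hv, rfl⟩ := bip_adj_inr hAle hb
          exact ⟨v, chipGraph_adj.1 hb.symm, rfl⟩
        · rintro ⟨v, hv, rfl⟩
          exact (chipGraph_adj.2 hv).symm
      rw [Nat.card_coe_set_eq, himg, Set.ncard_image_of_injective _ Sum.inl_injective]
      have hbase : {v : V | v ∈ (e : Sym2 V)} = {u, w} := by rw [hew]; exact setOf_mem_pair
      by_cases hT' : (e : Sym2 V) ∈ T.edgeSet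
      · rw [if_pos hT']
        have hset : {v : V | v ∈ (e : Sym2 V) ∧ ((e : Sym2 V) ∈ T.edgeSet ∨ c e ≠ v)} =
            {v : V | v ∈ (e : Sym2 V)} := by
          ext v
          simp only [Set.mem_setOf_eq, and_iff_left_iff_imp]
          exact fun _ => Or.inl hT'
        rw [hset, hbase, Set.ncard_pair huw]
      · rw [if_neg hT']
        have hce := hc e hT'
        have hset : {v : V | v ∈ (e : Sym2 V) ∧ ((e : Sym2 V) ∈ T.edgeSet ∨ c e ≠ v)} =
            {v : V | v ∈ (e : Sym2 V)} \ {c e} := by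
          ext v
          simp only [Set.mem_setOf_eq, Set.mem_diff, Set.mem_singleton_iff]
          constructor
          · rintro ⟨h1, h2 | h2⟩
            · exact absurd h2 hT'
            · exact ⟨h1, fun hq => h2 hq.symm⟩
          · rintro ⟨h1, h2⟩
            exact ⟨h1, Or.inr fun hq => h2 hq.symm⟩
        rw [hset, hbase]
        rw [hew, Sym2.mem_iff] at hce
        rcases hce with hcu | hcw
        · rw [← hcu] at huw ⊢
          rw [Set.pair_diff_left huw, Set.ncard_singleton]
        · rw [← hcw] at huw ⊢
          rw [Set.pair_diff_right huw, Set.ncard_singleton]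
    have hcard : Nat.card A.edgeSet =
        ∑ e : G.edgeSet, Nat.card (A.neighborSet (Sum.inr e)) := by
      rw [bip_edge_equiv hAle, Nat.card_eq_fintype_card, Fintype.card_sigma]
      simp [Nat.card_eq_fintype_card]
    have hsum : ∑ e : G.edgeSet, (if (e : Sym2 V) ∈ T.edgeSet then (2 : ℕ) else 1) =
        Fintype.card G.edgeSet + (Finset.univ.filter
          (fun e : G.edgeSet => (e : Sym2 V) ∈ T.edgeSet)).card := by
      have : ∀ e : G.edgeSet, (if (e : Sym2 V) ∈ T.edgeSet then (2 : ℕ) else 1) =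
          1 + (if (e : Sym2 V) ∈ T.edgeSet then 1 else 0) := by
        intro e; split <;> rfl
      rw [Finset.sum_congr rfl fun e _ => this e, Finset.sum_add_distrib,
        Finset.sum_const, smul_eq_mul, mul_one, Finset.sum_boole]
      simp [Finset.card_univ]
    have hfilter : (Finset.univ.filter
        (fun e : G.edgeSet => (e : Sym2 V) ∈ T.edgeSet)).card = Nat.card T.edgeSet := by
      rw [← Fintype.card_subtype, ← Nat.card_eq_fintype_card]
      refine Nat.card_congr ?_
      exact
        { toFun := fun p => ⟨(p.1 : Sym2 V), p.2⟩
          invFun := fun p => ⟨⟨(p : Sym2 V), edgeSet_mono hTG p.2⟩, p.2⟩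
          left_inv := fun p => rfl
          right_inv := fun p => rfl }
    have hTcard : T.edgeFinset.card + 1 = Fintype.card V := hT.card_edgeFinset
    have h1 : A.edgeFinset.card = Nat.card A.edgeSet := by
      rw [Nat.card_eq_fintype_card, edgeFinset_card]
    have h2 : T.edgeFinset.card = Nat.card T.edgeSet := by
      rw [Nat.card_eq_fintype_card, edgeFinset_card]
    have hVE : Fintype.card (V ⊕ G.edgeSet) = Fintype.card V + Fintype.card G.edgeSet :=
      Fintype.card_sum
    refine aux_isTree_of_card hconn ?_
    have := hcard
    rw [Finset.sum_congr rfl fun e _ => hfiber e, hsum, hfilter] at this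
    omega
  · -- degrees
    intro v
    have hnb : A.neighborSet (Sum.inl v) = Sum.inr ''
        {e : G.edgeSet | v ∈ (e : Sym2 V) ∧ ((e : Sym2 V) ∈ T.edgeSet ∨ c e ≠ v)} := by
      rw [bip_neighbor_inl hAle v]
      have hSS : {e : G.edgeSet | A.Adj (Sum.inl v) (Sum.inr e)} =
          {e : G.edgeSet | v ∈ (e : Sym2 V) ∧ ((e : Sym2 V) ∈ T.edgeSet ∨ c e ≠ v)} := by
        ext e
        exact chipGraph_adj
      rw [hSS]
    have hsub : {e : G.edgeSet | (e : Sym2 V) ∉ T.edgeSet ∧ c e = v} ⊆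
        {e : G.edgeSet | v ∈ (e : Sym2 V)} := by
      rintro e ⟨he1, he2⟩
      exact he2 ▸ hc e he1
    have hsplit : {e : G.edgeSet | v ∈ (e : Sym2 V) ∧ ((e : Sym2 V) ∈ T.edgeSet ∨ c e ≠ v)} =
        {e : G.edgeSet | v ∈ (e : Sym2 V)} \
          {e : G.edgeSet | (e : Sym2 V) ∉ T.edgeSet ∧ c e = v} := by
      ext e
      simp only [Set.mem_setOf_eq, Set.mem_diff, not_and]
      constructor
      · rintro ⟨h1, h2⟩
        refine ⟨h1, fun hnt => ?_⟩
        rcases h2 with h2 | h2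
        · exact absurd h2 hnt
        · exact fun hq => h2 hq
      · rintro ⟨h1, h2⟩
        refine ⟨h1, ?_⟩
        by_cases ht : (e : Sym2 V) ∈ T.edgeSet
        · exact Or.inl ht
        · exact Or.inr fun hq => h2 ht hq
    have hle' : ({e : G.edgeSet | (e : Sym2 V) ∉ T.edgeSet ∧ c e = v}).ncard ≤
        ({e : G.edgeSet | v ∈ (e : Sym2 V)}).ncard :=
      Set.ncard_le_ncard hsub (Set.toFinite _)
    rw [hnb, Set.ncard_image_of_injective _ Sum.inr_injective, hsplit,
      Set.ncard_diff hsub, hx v, ncard_neighbor_eq_incidence G v]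
    push_cast [Nat.cast_sub hle']
    ring

def projGraph {V : Type} (G : SimpleGraph V) (A : SimpleGraph (V ⊕ G.edgeSet)) :
    SimpleGraph V where
  Adj u w := ∃ e : G.edgeSet, (e : Sym2 V) = s(u, w) ∧
    A.Adj (Sum.inl u) (Sum.inr e) ∧ A.Adj (Sum.inl w) (Sum.inr e)
  symm := by
    constructor
    rintro u w ⟨e, hew, h1, h2⟩
    exact ⟨e, by rw [hew, Sym2.eq_swap], h2, h1⟩
  loopless := by
    constructor
    rintro u ⟨e, hew, -, -⟩
    exact (G.mem_edgeSet.1 (hew ▸ e.2)).ne rfl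

lemma backward_dir {V : Type} [Fintype V] [DecidableEq V] (G : SimpleGraph V) (hG : G.Connected)
    (x : V → ℤ)
    (h : ∃ A : SimpleGraph (V ⊕ G.edgeSet), A ≤ BipG G ∧ A.IsTree ∧
      ∀ v : V, ((A.neighborSet (Sum.inl v)).ncard : ℤ) =
        ((G.neighborSet v).ncard : ℤ) - 1 - x v + 1) :
    IsBreakDivisor G x := by
  classical
  obtain ⟨A, hAle, hAtree, hdeg⟩ := h
  obtain ⟨r⟩ : Nonempty V := hG.nonempty
  set T : SimpleGraph V := projGraph G A with hTdef
  -- every edge node has an adjacent endpoint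
  have hex : ∀ e : G.edgeSet, ∃ v : V, v ∈ (e : Sym2 V) ∧ A.Adj (Sum.inl v) (Sum.inr e) := by
    intro e
    obtain ⟨u, w, huw, hew⟩ := edge_exists_pair e
    have hru : A.Reachable (Sum.inr e) (Sum.inl u) := hAtree.isConnected _ _
    obtain ⟨p⟩ := hru
    cases p with
    | cons h' q =>
      obtain ⟨v, hv, rfl⟩ := bip_adj_inr hAle h'
      exact ⟨v, hv, h'.symm⟩
  have hTG : T ≤ G := by
    rintro u w ⟨e, hew, -, -⟩
    exact G.mem_edgeSet.1 (hew ▸ e.2)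
  have memT : ∀ (e : G.edgeSet), (e : Sym2 V) ∈ T.edgeSet ↔
      ∀ v ∈ (e : Sym2 V), A.Adj (Sum.inl v) (Sum.inr e) := by
    intro e
    obtain ⟨u, w, huw, hew⟩ := edge_exists_pair e
    constructor
    · intro ht v hv
      rw [hew] at ht
      obtain ⟨e', hew', h1, h2⟩ := T.mem_edgeSet.1 ht
      obtain rfl : e' = e := Subtype.ext (by rw [hew', ← hew])
      rw [hew, Sym2.mem_iff] at hv
      rcases hv with rfl | rfl
      · exact h1
      · exact h2
    · intro hall
      rw [hew]
      refine T.mem_edgeSet.2 ⟨e, hew, ?_, ?_⟩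
      · exact hall u (by rw [hew]; exact Sym2.mem_mk_left _ _)
      · exact hall w (by rw [hew]; exact Sym2.mem_mk_right _ _)
  -- choose chips
  have hchoice : ∀ e : G.edgeSet, ∃ v : V, v ∈ (e : Sym2 V) ∧
      ((e : Sym2 V) ∉ T.edgeSet → ¬ A.Adj (Sum.inl v) (Sum.inr e)) := by
    intro e
    obtain ⟨u, w, huw, hew⟩ := edge_exists_pair e
    by_cases ht : (e : Sym2 V) ∈ T.edgeSet
    · exact ⟨u, by rw [hew]; exact Sym2.mem_mk_left _ _, fun hmt => absurd ht hmt⟩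
    · have : ¬ ∀ v ∈ (e : Sym2 V), A.Adj (Sum.inl v) (Sum.inr e) :=
        fun hall => ht ((memT e).2 hall)
      push_neg at this
      obtain ⟨v, hv, hnadj⟩ := this
      exact ⟨v, hv, fun _ => hnadj⟩
  choose c hc1 hc2 using hchoice
  -- characterization of chip sets
  have hiff : ∀ (e : G.edgeSet) (v : V),
      ((e : Sym2 V) ∉ T.edgeSet ∧ c e = v) ↔
        (v ∈ (e : Sym2 V) ∧ ¬ A.Adj (Sum.inl v) (Sum.inr e)) := by
    intro e v
    obtain ⟨u, w, huw, hew⟩ := edge_exists_pair e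
    constructor
    · rintro ⟨ht, rfl⟩
      exact ⟨hc1 e, hc2 e ht⟩
    · rintro ⟨hv, hnadj⟩
      have ht : (e : Sym2 V) ∉ T.edgeSet := by
        intro ht
        exact hnadj ((memT e).1 ht v hv)
      refine ⟨ht, ?_⟩
      by_contra hne
      obtain ⟨v0, hv0, hadj0⟩ := hex e
      have hnadjc := hc2 e ht
      have hcmem := hc1 e
      rw [hew, Sym2.mem_iff] at hv hv0 hcmem
      rcases hv with rfl | rfl <;> rcases hv0 with rfl | rfl <;>
        rcases hcmem with hcu | hcw <;> first
        | exact hnadj hadj0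
        | exact hne hcu.symm ▸ trivial
        | exact hne hcw.symm ▸ trivial
        | exact hnadjc (hcu ▸ hadj0)
        | exact hnadjc (hcw ▸ hadj0)
        | exact hne hcu
        | exact hne hcw
  -- x values
  have hsubadj : ∀ v : V, {e : G.edgeSet | A.Adj (Sum.inl v) (Sum.inr e)} ⊆
      {e : G.edgeSet | v ∈ (e : Sym2 V)} := by
    intro v e he
    obtain ⟨e', hv, heq⟩ := bip_adj_inl hAle he
    obtain rfl : e' = e := Sum.inr.inj heq.symm
    exact hv
  have hX : ∀ v : V, x v = (({e : G.edgeSet | (e : Sym2 V) ∉ T.edgeSet ∧ c e = v}).ncard : ℤ) := by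
    intro v
    have hdv := hdeg v
    have hnb : (A.neighborSet (Sum.inl v)).ncard =
        ({e : G.edgeSet | A.Adj (Sum.inl v) (Sum.inr e)}).ncard := by
      rw [bip_neighbor_inl hAle v, Set.ncard_image_of_injective _ Sum.inr_injective]
    have hSeq : {e : G.edgeSet | (e : Sym2 V) ∉ T.edgeSet ∧ c e = v} =
        {e : G.edgeSet | v ∈ (e : Sym2 V)} \ {e : G.edgeSet | A.Adj (Sum.inl v) (Sum.inr e)} := by
      ext e
      rw [Set.mem_diff]
      exact hiff e v
    have hle' : ({e : G.edgeSet | A.Adj (Sum.inl v) (Sum.inr e)}).ncard ≤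
        ({e : G.edgeSet | v ∈ (e : Sym2 V)}).ncard :=
      Set.ncard_le_ncard (hsubadj v) (Set.toFinite _)
    rw [hnb, ncard_neighbor_eq_incidence G v] at hdv
    rw [hSeq, Set.ncard_diff (hsubadj v), Nat.cast_sub hle']
    omega
  -- T is connected
  have hproj : ∀ n : ℕ, ∀ {u w : V} (p : A.Walk (Sum.inl u) (Sum.inl w)),
      p.length = n → T.Reachable u w := by
    intro n
    induction n using Nat.strong_induction_on with
    | _ n ih =>
      intro u w p hn
      cases p with
      | nil => exact Reachable.refl u
      | cons h' q =>
        obtain ⟨e, hue, rfl⟩ := bip_adj_inl hAle h'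
        cases q with
        | cons h'' q' =>
          obtain ⟨u', hu'e, rfl⟩ := bip_adj_inr hAle h''
          have hlen : q'.length < n := by
            simp only [Walk.length_cons] at hn
            omega
          have hr : T.Reachable u' w := ih q'.length hlen q' rfl
          by_cases huu : u = u'
          · subst huu; exact hr
          · have hadj : T.Adj u u' :=
              ⟨e, (Sym2.mem_and_mem_iff huu).1 ⟨hue, hu'e⟩, h', h''.symm⟩
            exact hadj.reachable.trans hr
  have hTconn : T.Connected := by
    haveI : Nonempty V := ⟨r⟩
    exact Connected.mk fun u w =>
      hproj _ ((hAtree.isConnected (Sum.inl u) (Sum.inl w)).some) rfl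
  -- edge counting
  have hfib : ∀ e : G.edgeSet, Nat.card (A.neighborSet (Sum.inr e)) =
      if (e : Sym2 V) ∈ T.edgeSet then 2 else 1 := by
    intro e
    obtain ⟨u, w, huw, hew⟩ := edge_exists_pair e
    by_cases ht : (e : Sym2 V) ∈ T.edgeSet
    · rw [if_pos ht]
      have hboth := (memT e).1 ht
      have hnbe : A.neighborSet (Sum.inr e) = {Sum.inl u, Sum.inl w} := by
        refine Set.Subset.antisymm (bip_neighbor_inr_subset hAle hew) ?_
        rintro b (rfl | rfl)
        · exact (hboth u (by rw [hew]; exact Sym2.mem_mk_left _ _)).symm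
        · exact (hboth w (by rw [hew]; exact Sym2.mem_mk_right _ _)).symm
      rw [Nat.card_coe_set_eq, hnbe,
        Set.ncard_pair (fun hq => huw (Sum.inl.inj hq))]
    · rw [if_neg ht]
      obtain ⟨v0, hv0, hadj0⟩ := hex e
      have hnadjc := hc2 e ht
      have hcm := hc1 e
      have hnbe : A.neighborSet (Sum.inr e) = {Sum.inl v0} := by
        refine Set.Subset.antisymm ?_ ?_
        · intro b hb
          obtain ⟨v', hv', rfl⟩ := bip_adj_inr hAle hb
          have hadj'' : A.Adj (Sum.inl v') (Sum.inr e) := hb.symm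
          have hgoal : v' = v0 := by
            rw [hew, Sym2.mem_iff] at hv' hv0
            rw [hew, Sym2.mem_iff] at hcm
            rcases hv' with rfl | rfl <;> rcases hv0 with h0 | h0 <;>
              rcases hcm with hc' | hc' <;>
              first
              | exact h0.symm
              | (rw [hc'] at hnadjc; exact absurd hadj'' hnadjc)
              | (rw [hc', ← h0] at hnadjc; exact absurd hadj0 hnadjc)
          rw [hgoal]
          rfl
        · rintro b rfl
          exact hadj0.symm
      rw [Nat.card_coe_set_eq, hnbe, Set.ncard_singleton]
  have hcardA : Nat.card A.edgeSet =
      ∑ e : G.edgeSet, Nat.card (A.neighborSet (Sum.inr e)) := by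
    rw [bip_edge_equiv hAle, Nat.card_eq_fintype_card, Fintype.card_sigma]
    simp [Nat.card_eq_fintype_card]
  have hsum : ∑ e : G.edgeSet, (if (e : Sym2 V) ∈ T.edgeSet then (2 : ℕ) else 1) =
      Fintype.card G.edgeSet + (Finset.univ.filter
        (fun e : G.edgeSet => (e : Sym2 V) ∈ T.edgeSet)).card := by
    have h2 : ∀ e : G.edgeSet, (if (e : Sym2 V) ∈ T.edgeSet then (2 : ℕ) else 1) =
        1 + (if (e : Sym2 V) ∈ T.edgeSet then 1 else 0) := by
      intro e; split <;> rfl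
    rw [Finset.sum_congr rfl fun e _ => h2 e, Finset.sum_add_distrib,
      Finset.sum_const, smul_eq_mul, mul_one, Finset.sum_boole]
    simp [Finset.card_univ]
  have hfilter : (Finset.univ.filter
      (fun e : G.edgeSet => (e : Sym2 V) ∈ T.edgeSet)).card = Nat.card T.edgeSet := by
    rw [← Fintype.card_subtype, ← Nat.card_eq_fintype_card]
    refine Nat.card_congr ?_
    exact
      { toFun := fun p => ⟨(p.1 : Sym2 V), p.2⟩
        invFun := fun p => ⟨⟨(p : Sym2 V), edgeSet_mono hTG p.2⟩, p.2⟩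
        left_inv := fun p => rfl
        right_inv := fun p => rfl }
  have hAcount : A.edgeFinset.card + 1 = Fintype.card (V ⊕ G.edgeSet) :=
    hAtree.card_edgeFinset
  have h1 : A.edgeFinset.card = Nat.card A.edgeSet := by
    rw [Nat.card_eq_fintype_card, edgeFinset_card]
  have h2 : T.edgeFinset.card = Nat.card T.edgeSet := by
    rw [Nat.card_eq_fintype_card, edgeFinset_card]
  have hVE : Fintype.card (V ⊕ G.edgeSet) = Fintype.card V + Fintype.card G.edgeSet :=
    Fintype.card_sum
  have hTtree : T.IsTree := by
    refine aux_isTree_of_card hTconn ?_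
    have hc' := hcardA
    rw [Finset.sum_congr rfl fun e _ => hfib e, hsum, hfilter] at hc'
    haveI : Nonempty V := ⟨r⟩
    have hVpos : 0 < Fintype.card V := Fintype.card_pos
    omega
  exact ⟨T, hTG, hTtree, c, fun e ht => hc1 e, hX⟩


/-- `x ∈ ℤ^V` is a break divisor of `G` if and only if `d_G − 1 − x`
is a hypertree of `Bip(G)` on `V`, i.e. some spanning tree `T` of `Bip(G)` has
degree `d_G(v) − x(v)` at every original vertex `v`. -/
theorem break_divisor_iff_hypertree
    {V : Type} [Fintype V] [DecidableEq V]
    (G : SimpleGraph V) (hG : G.Connected)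
    (x : V → ℤ) :
    IsBreakDivisor G x ↔
    (∃ T : SimpleGraph (V ⊕ G.edgeSet), T ≤ BipG G ∧ T.IsTree ∧
        ∀ v : V, ((T.neighborSet (Sum.inl v)).ncard : ℤ) =
          ((G.neighborSet v).ncard : ℤ) - 1 - x v + 1) := by
  exact ⟨fun h => forward_dir G hG x h, fun h => backward_dir G hG x h⟩
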